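/- arXiv:1707.01189 — 4 statements merged into one kernel-verified Lean document; each statement's English description precedes it below -/
import Mathlib

section
/- For a zero-mean Laplace distribution with density f(x) = (1/(2b)) exp(-|x|/b) and scale b = Δf/ε, for any two real values v₁, v₂ with |v₁ - v₂| ≤ Δf and any x ∈ ℝ, the ratio f(x - v₁)/f(x - v₂) is at most exp(ε). -/
open Real

theorem laplace_density_ratio_bound
    (b ε Δf : ℝ) (hb : b > 0) (hε : ε > 0) (hΔf : Δf > 0)
    (hbe : b = Δf / ε)
    (v₁ v₂ : ℝ) (hv : |v₁ - v₂| ≤ Δf) (x : ℝ) :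
    (1 / (2 * b)) * exp (-|x - v₁| / b) / ((1 / (2 * b)) * exp (-|x - v₂| / b))
      ≤ exp ε := by
  have h2b : (1 : ℝ) / (2 * b) > 0 := by positivity
  rw [mul_div_mul_left _ _ (ne_of_gt h2b), ← Real.exp_sub]
  apply Real.exp_le_exp.mpr
  have key : |x - v₂| - |x - v₁| ≤ Δf := by
    have := abs_sub_abs_le_abs_sub (x - v₂) (x - v₁)
    have h2 : |x - v₂ - (x - v₁)| = |v₁ - v₂| := by
      rw [show x - v₂ - (x - v₁) = v₁ - v₂ by ring]
    linarith
  have hΔ : Δf = b * ε := by rw [hbe, div_mul_cancel₀ _ hε.ne']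
  rw [div_sub_div_same, div_le_iff₀ hb]
  nlinarith [key, hΔ]
end

section
/- For the symmetric geometric distribution with parameter α > 1, given by P(k) = ((α-1)/(α+1)) α^{-|k|} for k ∈ ℤ, and α = exp(ε/Δf), for any integers v₁, v₂ with |v₁ - v₂| ≤ Δf and any k ∈ ℤ, the ratio P(k - v₁)/P(k - v₂) is at most exp(ε). -/
open Real

theorem geometric_mechanism_dp
    (ε : ℝ) (hε : ε > 0) (Δf : ℤ) (hΔf : Δf > 0)
    (α : ℝ) (hα : α = exp (ε / (Δf : ℝ)))
    (v₁ v₂ : ℤ) (hv : |v₁ - v₂| ≤ Δf) (k : ℤ) :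
    ((α - 1) / (α + 1)) * α ^ (-|k - v₁|) /
      (((α - 1) / (α + 1)) * α ^ (-|k - v₂|)) ≤ exp ε := by
  have hΔf' : (0 : ℝ) < (Δf : ℝ) := by exact_mod_cast hΔf
  have hα1 : 1 < α := by
    rw [hα]; exact Real.one_lt_exp_iff.mpr (div_pos hε hΔf')
  have hα0 : 0 < α := lt_trans one_pos hα1
  have hc : 0 < (α - 1) / (α + 1) := div_pos (by linarith) (by linarith)
  rw [mul_div_mul_left _ _ (ne_of_gt hc), ← zpow_sub₀ (ne_of_gt hα0)]
  have hexp : exp ε = α ^ (Δf : ℤ) := by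
    have h3 : (Δf : ℤ) = (Δf.toNat : ℤ) := by omega
    have h4 : ((Δf.toNat : ℕ) : ℝ) = (Δf : ℝ) := by exact_mod_cast h3.symm
    rw [hα, h3, zpow_natCast, ← Real.exp_nat_mul]
    congr 1
    rw [h4]
    field_simp
    rw [← h3, div_self (ne_of_gt hΔf')]
  rw [hexp]
  apply zpow_le_zpow_right₀ hα1.le
  have h1 : |k - v₂| - |k - v₁| ≤ |(k - v₂) - (k - v₁)| := abs_sub_abs_le_abs_sub _ _
  have h2 : (k - v₂) - (k - v₁) = v₁ - v₂ := by ring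
  rw [h2] at h1
  omega
end

section
/- For the piecewise Laplace mixture density Lm with inner scale b₂ on |x| ≤ c_t and outer scale b₁ on |x| > c_t and constants a₁, a₂ > 0, the second moment satisfies ∫_ℝ x² Lm(x) dx = 2a₂(b₂² - exp(-c_t/b₂)(b₂² + b₂ c_t + c_t²/2)) + 2a₁ exp(-c_t/b₁)(b₁² + b₁ c_t + c_t²/2). -/
open Real MeasureTheory Set Filter

private lemma antideriv_hasDerivAt {b : ℝ} (hb : b > 0) (x : ℝ) :
    HasDerivAt (fun x => -(Real.exp (-x/b) * (x^2*b + 2*x*b^2 + 2*b^3)))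
      (x^2 * Real.exp (-x/b)) x := by
  have he : HasDerivAt (fun x : ℝ => Real.exp (-x/b)) (Real.exp (-x/b) * (-1/b)) x := by
    have h : HasDerivAt (fun x : ℝ => -x/b) (-1/b) x := (hasDerivAt_id x).neg.div_const b
    simpa using h.exp
  have hp : HasDerivAt (fun x : ℝ => x^2*b + 2*x*b^2 + 2*b^3) (2*x*b + 2*b^2) x := by
    have h := (((hasDerivAt_pow 2 x).mul_const b).add
      (((hasDerivAt_id x).const_mul 2).mul_const (b^2))).add_const (2*b^3)
    exact h.congr_deriv (by push_cast; ring)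
  have := (he.mul hp).neg
  exact this.congr_deriv (by field_simp; ring)

private lemma pow_exp_tendsto {b : ℝ} (hb : b > 0) (n : ℕ) :
    Tendsto (fun x => x^n * Real.exp (-x/b)) atTop (nhds 0) := by
  have h := ((Real.tendsto_pow_mul_exp_neg_atTop_nhds_zero n).comp
      (tendsto_id.atTop_div_const hb)).const_mul (b^n)
  simp only [Function.comp] at h
  rw [mul_zero] at h
  convert h using 2 with x
  rw [neg_div]
  simp only [id, div_pow]
  field_simp

private lemma antideriv_tendsto {b : ℝ} (hb : b > 0) :
    Tendsto (fun x => -(Real.exp (-x/b) * (x^2*b + 2*x*b^2 + 2*b^3))) atTop (nhds 0) := by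
  have h2 := (pow_exp_tendsto hb 2).const_mul b
  have h1 := (pow_exp_tendsto hb 1).const_mul (2*b^2)
  have h0 := (pow_exp_tendsto hb 0).const_mul (2*b^3)
  have := ((h2.add h1).add h0).neg
  simp only [mul_zero, add_zero, neg_zero] at this
  convert this using 2 with x
  ring

private lemma tail_integral {b : ℝ} (hb : b > 0) (c : ℝ) :
    ∫ x in Ioi c, x^2 * Real.exp (-x/b)
      = Real.exp (-c/b) * (c^2*b + 2*c*b^2 + 2*b^3) := by
  have := integral_Ioi_of_hasDerivAt_of_nonneg'
    (a := c) (g := fun x => -(Real.exp (-x/b) * (x^2*b + 2*x*b^2 + 2*b^3)))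
    (g' := fun x => x^2 * Real.exp (-x/b))
    (fun x _ => antideriv_hasDerivAt hb x)
    (fun x _ => by positivity) (antideriv_tendsto hb)
  rw [this]; ring

private lemma tail_integrable {b : ℝ} (hb : b > 0) (c : ℝ) :
    IntegrableOn (fun x => x^2 * Real.exp (-x/b)) (Ioi c) := by
  exact integrableOn_Ioi_deriv_of_nonneg'
    (a := c) (g := fun x => -(Real.exp (-x/b) * (x^2*b + 2*x*b^2 + 2*b^3)))
    (fun x _ => antideriv_hasDerivAt hb x)
    (fun x _ => by positivity) (antideriv_tendsto hb)

private lemma mid_integral {b : ℝ} (hb : b > 0) {c : ℝ} (hc : 0 ≤ c) :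
    ∫ x in Ioc 0 c, x^2 * Real.exp (-x/b)
      = 2*b^3 - Real.exp (-c/b) * (c^2*b + 2*c*b^2 + 2*b^3) := by
  rw [← intervalIntegral.integral_of_le hc]
  have := intervalIntegral.integral_eq_sub_of_hasDerivAt
    (f := fun x => -(Real.exp (-x/b) * (x^2*b + 2*x*b^2 + 2*b^3)))
    (f' := fun x => x^2 * Real.exp (-x/b))
    (fun x _ => antideriv_hasDerivAt hb x)
    (Continuous.intervalIntegrable (by continuity) 0 c)
  rw [this]
  simp
  ring

theorem laplace_mixture_second_moment
    (b₁ b₂ ct a₁ a₂ : ℝ) (hb₁ : b₁ > 0) (hb₂ : b₂ > 0) (hct : ct > 0)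
    (ha₁ : a₁ > 0) (ha₂ : a₂ > 0)
    (Lm : ℝ → ℝ)
    (hLm : ∀ x, Lm x = if |x| ≤ ct then (a₂ / (2 * b₂)) * exp (-|x| / b₂)
      else (a₁ / (2 * b₁)) * exp (-|x| / b₁)) :
    ∫ x : ℝ, x ^ 2 * Lm x
      = 2 * a₂ * (b₂ ^ 2 - exp (-ct / b₂) * (b₂ ^ 2 + b₂ * ct + ct ^ 2 / 2))
        + 2 * a₁ * exp (-ct / b₁) * (b₁ ^ 2 + b₁ * ct + ct ^ 2 / 2) := by
  have habs : ∀ x : ℝ, x ^ 2 * Lm x = (fun t : ℝ => t ^ 2 * Lm t) |x| := by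
    intro x
    simp only [hLm, abs_abs, sq_abs]
  have habs' : ∀ x : ℝ, Lm |x| = Lm x := fun x => by rw [hLm, hLm, abs_abs]
  have h0 : ∫ x : ℝ, x ^ 2 * Lm x = 2 * ∫ x in Ioi (0:ℝ), x ^ 2 * Lm x := by
    have h := integral_comp_abs (f := fun t : ℝ => t ^ 2 * Lm t)
    simpa only [sq_abs, habs'] using h
  -- congruence on the two pieces
  have hmid_eq : EqOn (fun x : ℝ => x ^ 2 * Lm x)
      (fun x => a₂ / (2 * b₂) * (x ^ 2 * Real.exp (-x / b₂))) (Ioc 0 ct) := by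
    intro x hx
    have hx0 : 0 < x := hx.1
    simp only [hLm, abs_of_pos hx0, if_pos hx.2]
    ring
  have htail_eq : EqOn (fun x : ℝ => x ^ 2 * Lm x)
      (fun x => a₁ / (2 * b₁) * (x ^ 2 * Real.exp (-x / b₁))) (Ioi ct) := by
    intro x hx
    have hx0 : 0 < x := hct.trans hx
    simp only [hLm, abs_of_pos hx0, if_neg (not_le.mpr (mem_Ioi.mp hx))]
    ring
  have hmid_int : IntegrableOn (fun x : ℝ => x ^ 2 * Lm x) (Ioc 0 ct) := by
    have h : IntegrableOn (fun x => a₂ / (2 * b₂) * (x ^ 2 * Real.exp (-x / b₂))) (Ioc 0 ct) :=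
      (Continuous.integrableOn_Ioc (by continuity) :
        IntegrableOn (fun x => x ^ 2 * Real.exp (-x / b₂)) (Ioc 0 ct) volume).const_mul _
    exact h.congr_fun hmid_eq.symm measurableSet_Ioc
  have htail_int : IntegrableOn (fun x : ℝ => x ^ 2 * Lm x) (Ioi ct) := by
    have h : IntegrableOn (fun x => a₁ / (2 * b₁) * (x ^ 2 * Real.exp (-x / b₁))) (Ioi ct) :=
      (tail_integrable hb₁ ct).const_mul _
    exact h.congr_fun htail_eq.symm measurableSet_Ioi
  have hsplit : ∫ x in Ioi (0:ℝ), x ^ 2 * Lm x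
      = (∫ x in Ioc 0 ct, x ^ 2 * Lm x) + ∫ x in Ioi ct, x ^ 2 * Lm x := by
    rw [← setIntegral_union (Ioc_disjoint_Ioi le_rfl) measurableSet_Ioi hmid_int htail_int,
      Ioc_union_Ioi_eq_Ioi hct.le]
  have hmid : ∫ x in Ioc 0 ct, x ^ 2 * Lm x
      = a₂ / (2 * b₂) * (2*b₂^3 - Real.exp (-ct/b₂) * (ct^2*b₂ + 2*ct*b₂^2 + 2*b₂^3)) := by
    rw [setIntegral_congr_fun measurableSet_Ioc hmid_eq, integral_const_mul,
      mid_integral hb₂ hct.le]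
  have htail : ∫ x in Ioi ct, x ^ 2 * Lm x
      = a₁ / (2 * b₁) * (Real.exp (-ct/b₁) * (ct^2*b₁ + 2*ct*b₁^2 + 2*b₁^3)) := by
    rw [setIntegral_congr_fun measurableSet_Ioi htail_eq, integral_const_mul,
      tail_integral hb₁ ct]
  rw [h0, hsplit, hmid, htail]
  field_simp
  ring
end

section
/- A symmetric geometric random variable can be realized as the difference of floors of two i.i.d. exponentials: if E₁, E₂ are i.i.d. Exponential(λ) with λ > 0, then ⌊E₁⌋ - ⌊E₂⌋ has the symmetric geometric distribution with parameter α = exp(λ), i.e., P(⌊E₁⌋ - ⌊E₂⌋ = k) = ((α-1)/(α+1)) α^{-|k|} for every k ∈ ℤ. -/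
open Real MeasureTheory ProbabilityTheory Set
open scoped ENNReal NNReal

lemma expMeasure_apply' {lam : ℝ} (s : Set ℝ) (hs : MeasurableSet s) :
    expMeasure lam s = ∫⁻ x in s, exponentialPDF lam x := by
  rw [expMeasure, gammaMeasure, withDensity_apply _ hs]; rfl

lemma floor_exp_dist {Ω : Type*} [MeasurableSpace Ω] (μ : Measure Ω)
    {lam : ℝ} (hlam : 0 < lam) (E : Ω → ℝ) (hE : Measurable E)
    (hd : Measure.map E μ = expMeasure lam) (n : ℤ) :
    μ {ω | ⌊E ω⌋ = n} =
      ENNReal.ofReal (if 0 ≤ n then (1 - exp (-lam)) * exp (-lam) ^ n.toNat else 0) := by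
  have hsfloor : MeasurableSet {x : ℝ | ⌊x⌋ = n} :=
    Int.measurable_floor (measurableSet_singleton n)
  have hmap : μ {ω | ⌊E ω⌋ = n} = expMeasure lam {x | ⌊x⌋ = n} := by
    rw [← hd, Measure.map_apply hE hsfloor]; rfl
  have hset : {x : ℝ | ⌊x⌋ = n} = Ico (n : ℝ) ((n : ℝ) + 1) := by
    ext x; simp [Int.floor_eq_iff, mem_Ico]
  rw [hmap, hset]
  by_cases hn : 0 ≤ n
  · -- nonnegative case
    haveI : NullSingletonClass (expMeasure lam) := by
      constructor
      intro a
      rw [expMeasure, gammaMeasure]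
      exact (withDensity_absolutelyContinuous _ _) (measure_singleton a)
    have hIoc : expMeasure lam (Ico (n : ℝ) ((n : ℝ) + 1))
        = expMeasure lam (Ioc (n : ℝ) ((n : ℝ) + 1)) := measure_congr Ico_ae_eq_Ioc
    have hIic : ∀ x : ℝ, 0 ≤ x →
        expMeasure lam (Iic x) = ENNReal.ofReal (1 - exp (-(lam * x))) := by
      intro x hx
      rw [expMeasure_apply' _ measurableSet_Iic, lintegral_exponentialPDF_eq_antiDeriv hlam,
        if_pos hx]
    have hnR : (0 : ℝ) ≤ (n : ℝ) := by exact_mod_cast hn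
    have hkey : expMeasure lam (Iic (n : ℝ)) + expMeasure lam (Ioc (n : ℝ) ((n : ℝ) + 1))
        = expMeasure lam (Iic ((n : ℝ) + 1)) := by
      rw [← measure_union (Iic_disjoint_Ioc le_rfl) measurableSet_Ioc,
        Iic_union_Ioc_eq_Iic (by linarith)]
    rw [hIic _ hnR, hIic _ (by linarith)] at hkey
    -- exp identities
    have hexp1 : exp (-(lam * (n : ℝ))) = exp (-lam) ^ n.toNat := by
      rw [← Real.exp_nat_mul]
      congr 1
      have : ((n.toNat : ℤ) : ℝ) = (n : ℝ) := by exact_mod_cast Int.toNat_of_nonneg hn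
      push_cast at this ⊢
      rw [this]; ring
    have hexp2 : exp (-(lam * ((n : ℝ) + 1))) = exp (-lam) ^ (n.toNat + 1) := by
      rw [← Real.exp_nat_mul]
      congr 1
      have : ((n.toNat : ℤ) : ℝ) = (n : ℝ) := by exact_mod_cast Int.toNat_of_nonneg hn
      push_cast at this ⊢
      rw [this]; ring
    have hq1 : exp (-lam) < 1 := exp_lt_one_iff.mpr (by linarith)
    have hq0 : (0 : ℝ) < exp (-lam) := exp_pos _
    have hqpow1 : exp (-lam) ^ n.toNat ≤ 1 := pow_le_one₀ hq0.le hq1.le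
    have hqpow0 : (0 : ℝ) ≤ exp (-lam) ^ n.toNat := by positivity
    have hadd : ENNReal.ofReal (1 - exp (-(lam * (n : ℝ))))
        + ENNReal.ofReal ((1 - exp (-lam)) * exp (-lam) ^ n.toNat)
        = ENNReal.ofReal (1 - exp (-(lam * ((n : ℝ) + 1)))) := by
      rw [← ENNReal.ofReal_add (by rw [hexp1]; linarith)
        (mul_nonneg (by linarith) hqpow0)]
      congr 1
      rw [hexp1, hexp2]
      ring
    rw [← hadd] at hkey
    rw [hIoc, if_pos hn]
    exact ((ENNReal.add_right_inj ENNReal.ofReal_ne_top).mp hkey)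
  · -- negative case
    rw [if_neg hn]
    have hsub : Ico (n : ℝ) ((n : ℝ) + 1) ⊆ Iio (0 : ℝ) := by
      intro x hx
      have hn1 : (n : ℝ) + 1 ≤ 0 := by
        have : n + 1 ≤ 0 := by omega
        exact_mod_cast this
      exact lt_of_lt_of_le hx.2 hn1
    have h0 : expMeasure lam (Iio (0 : ℝ)) = 0 := by
      rw [expMeasure_apply' _ measurableSet_Iio]
      exact lintegral_exponentialPDF_of_nonpos le_rfl
    simp [measure_mono_null hsub h0]

lemma main_nonneg {Ω : Type*} [MeasurableSpace Ω] (μ : Measure Ω) [IsProbabilityMeasure μ]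
    (lam : ℝ) (hlam : 0 < lam)
    (E₁ E₂ : Ω → ℝ) (hE₁ : Measurable E₁) (hE₂ : Measurable E₂)
    (hind : IndepFun E₁ E₂ μ)
    (hd₁ : Measure.map E₁ μ = expMeasure lam)
    (hd₂ : Measure.map E₂ μ = expMeasure lam)
    (α : ℝ) (hα : α = exp lam) (k : ℤ) (hk : 0 ≤ k) :
    μ {ω | ⌊E₁ ω⌋ - ⌊E₂ ω⌋ = k}
      = ENNReal.ofReal (((α - 1) / (α + 1)) * α ^ (-|k|)) := by
  set p : ℝ := exp (-lam) with hp
  have hp0 : (0 : ℝ) < p := exp_pos _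
  have hp1 : p < 1 := exp_lt_one_iff.mpr (by linarith)
  set X : Ω → ℤ := fun ω => ⌊E₁ ω⌋ with hXdef
  set Y : Ω → ℤ := fun ω => ⌊E₂ ω⌋ with hYdef
  have hX : Measurable X := Int.measurable_floor.comp hE₁
  have hY : Measurable Y := Int.measurable_floor.comp hE₂
  have hXY : IndepFun X Y μ := hind.comp Int.measurable_floor Int.measurable_floor
  -- distribution function
  set g : ℤ → ℝ≥0∞ := fun m =>
    ENNReal.ofReal (if 0 ≤ m then (1 - p) * p ^ m.toNat else 0) with hg
  have hgX : ∀ m : ℤ, μ (X ⁻¹' {m}) = g m := fun m =>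
    floor_exp_dist μ hlam E₁ hE₁ hd₁ m
  have hgY : ∀ m : ℤ, μ (Y ⁻¹' {m}) = g m := fun m =>
    floor_exp_dist μ hlam E₂ hE₂ hd₂ m
  -- decompose the event
  have hdecomp : {ω | ⌊E₁ ω⌋ - ⌊E₂ ω⌋ = k}
      = ⋃ n : ℤ, (X ⁻¹' {n + k} ∩ Y ⁻¹' {n}) := by
    ext ω
    simp only [mem_setOf_eq, mem_iUnion, mem_inter_iff, mem_preimage, mem_singleton_iff,
      hXdef, hYdef]
    constructor
    · intro h; exact ⟨⌊E₂ ω⌋, by omega, rfl⟩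
    · rintro ⟨n, h1, h2⟩; omega
  have hdisj : Pairwise (Function.onFun Disjoint
      fun n : ℤ => X ⁻¹' {n + k} ∩ Y ⁻¹' {n}) := by
    intro i j hij
    rw [Function.onFun, Set.disjoint_left]
    rintro ω ⟨_, h1⟩ ⟨_, h2⟩
    simp only [mem_preimage, mem_singleton_iff] at h1 h2
    exact hij (h1.symm.trans h2)
  have hmeas : ∀ n : ℤ, MeasurableSet (X ⁻¹' {n + k} ∩ Y ⁻¹' {n}) := fun n =>
    (hX (measurableSet_singleton _)).inter (hY (measurableSet_singleton _))
  rw [hdecomp, measure_iUnion hdisj hmeas]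
  have hterm : ∀ n : ℤ, μ (X ⁻¹' {n + k} ∩ Y ⁻¹' {n}) = g (n + k) * g n := fun n => by
    rw [hXY.measure_inter_preimage_eq_mul _ _ (measurableSet_singleton _)
      (measurableSet_singleton _), hgX, hgY]
  simp_rw [hterm]
  -- split the integer sum
  rw [tsum_of_nat_of_neg_add_one ENNReal.summable ENNReal.summable]
  have hneg : ∀ n : ℕ, g ((-(↑n + 1) : ℤ) + k) * g (-(↑n + 1)) = 0 := by
    intro n
    have h0 : g (-(↑n + 1) : ℤ) = 0 := by
      rw [hg]
      simp only [if_neg (by omega : ¬ (0 : ℤ) ≤ -(↑n + 1))]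
      simp
    rw [h0, mul_zero]
  simp_rw [hneg]
  rw [tsum_zero, add_zero]
  -- compute the natural-number sum
  have hterm2 : ∀ n : ℕ, g (↑n + k) * g ↑n
      = ENNReal.ofReal (((1 - p) ^ 2 * p ^ k.toNat) * (p ^ 2) ^ n) := by
    intro n
    rw [hg]
    simp only [if_pos (by omega : (0 : ℤ) ≤ (↑n : ℤ) + k), if_pos (Int.ofNat_nonneg n)]
    rw [Int.toNat_add (Int.ofNat_nonneg n) hk, Int.toNat_natCast]
    rw [← ENNReal.ofReal_mul (mul_nonneg (by linarith) (by positivity))]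
    congr 1
    ring
  simp_rw [hterm2]
  rw [← ENNReal.ofReal_tsum_of_nonneg (fun n => by positivity)
    (((summable_geometric_of_lt_one (by positivity) (by nlinarith)).mul_left _))]
  rw [tsum_mul_left, tsum_geometric_of_lt_one (by positivity) (by nlinarith)]
  congr 1
  have hα1 : 1 < α := by rw [hα, ← Real.exp_zero]; exact Real.exp_lt_exp.mpr hlam
  have hα0 : (0 : ℝ) < α := by linarith
  have hpα : p = α⁻¹ := by rw [hα, hp, exp_neg]
  have habs : |k| = k := abs_of_nonneg hk
  rw [habs]
  have hzpow : α ^ (-k) = p ^ k.toNat := by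
    rw [hpα, zpow_neg, ← inv_zpow, ← zpow_natCast α⁻¹ k.toNat, Int.toNat_of_nonneg hk]
  rw [hzpow, hpα]
  set q : ℝ := α⁻¹ with hq2
  have hq1 : q < 1 := by
    rw [hq2, inv_lt_one_iff₀]; right; exact hα1
  have hq0 : (0:ℝ) < q := by rw [hq2]; positivity
  have ha : (1:ℝ) - q ≠ 0 := by linarith
  have hb : (1:ℝ) + q ≠ 0 := by positivity
  have hdiv : (α - 1)/(α + 1) = (1 - q)/(1 + q) := by
    rw [div_eq_div_iff (by linarith) (by positivity)]
    have hαne : α ≠ 0 := ne_of_gt hα0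
    have hαq : α * q = 1 := by rw [hq2]; field_simp
    nlinarith [hαq]
  have hfact : (1:ℝ) - q^2 = (1 - q) * (1 + q) := by ring
  rw [hdiv, hfact, mul_inv]
  field_simp

theorem floor_exponential_difference_symmetric_geometric
    {Ω : Type*} [MeasurableSpace Ω] (μ : Measure Ω) [IsProbabilityMeasure μ]
    (lam : ℝ) (hlam : 0 < lam)
    (E₁ E₂ : Ω → ℝ) (hE₁ : Measurable E₁) (hE₂ : Measurable E₂)
    (hind : IndepFun E₁ E₂ μ)
    (hd₁ : Measure.map E₁ μ = expMeasure lam)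
    (hd₂ : Measure.map E₂ μ = expMeasure lam)
    (α : ℝ) (hα : α = exp lam) (k : ℤ) :
    μ {ω | ⌊E₁ ω⌋ - ⌊E₂ ω⌋ = k}
      = ENNReal.ofReal (((α - 1) / (α + 1)) * α ^ (-|k|)) := by
  rcases le_or_gt 0 k with hk | hk
  · exact main_nonneg μ lam hlam E₁ E₂ hE₁ hE₂ hind hd₁ hd₂ α hα k hk
  · have hset : {ω | ⌊E₁ ω⌋ - ⌊E₂ ω⌋ = k} = {ω | ⌊E₂ ω⌋ - ⌊E₁ ω⌋ = -k} := by
      ext ω; simp only [mem_setOf_eq]; omega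
    have := main_nonneg μ lam hlam E₂ E₁ hE₂ hE₁ hind.symm hd₂ hd₁ α hα (-k) (by omega)
    rw [hset, this, abs_neg]
end
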